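/- Let S(x) be the generating function of the shadow sequence s(n) = a(n) − b(n) of Motzkin path counts, satisfying S(x) = 1 + xS(x) − x²S(x)². Then the series x·S(−x) = Σ_{n≥1} (−1)^{n-1} s(n−1) x^n has compositional inverse equal to the Fibonacci generating function Σ_{n≥1} F(n) x^n. -/

import Mathlib

inductive MStep where
  | U : MStep
  | D : MStep
  | H : MStep
deriving DecidableEq

/-- A word in {U,D,H} is a Motzkin path if #U = #D and no prefix has more D's than U's. -/
def IsMotzkin (w : List MStep) : Prop :=
  w.count MStep.U = w.count MStep.D ∧
  ∀ p : List MStep, p <+: w → p.count MStep.D ≤ p.count MStep.U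

/-- Number of Motzkin paths of length n (the n-th Motzkin number). -/
noncomputable def motzkinNum (n : ℕ) : ℕ :=
  Nat.card {w : List MStep // w.length = n ∧ IsMotzkin w}

/-- Number of Motzkin paths of length n with an even number of U steps. -/
noncomputable def evenMotzkin (n : ℕ) : ℕ :=
  Nat.card {w : List MStep // w.length = n ∧ IsMotzkin w ∧ Even (w.count MStep.U)}

/-- Number of Motzkin paths of length n with an odd number of U steps. -/
noncomputable def oddMotzkin (n : ℕ) : ℕ :=
  Nat.card {w : List MStep // w.length = n ∧ IsMotzkin w ∧ Odd (w.count MStep.U)}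

/-- The shadow of the n-th Motzkin number: s(n) = a(n) - b(n). -/
noncomputable def shadow (n : ℕ) : ℤ :=
  (evenMotzkin n : ℤ) - (oddMotzkin n : ℤ)

/-- Composition f ∘ g of formal power series (intended for g with zero constant term). -/
noncomputable def PSComp (f g : PowerSeries ℤ) : PowerSeries ℤ :=
  PowerSeries.mk fun n =>
    PowerSeries.coeff (R := ℤ) n
      (∑ k ∈ Finset.range (n + 1), PowerSeries.C (R := ℤ) (PowerSeries.coeff (R := ℤ) k f) * g ^ k)


instance : Fintype MStep :=
  ⟨{MStep.U, MStep.D, MStep.H}, by intro x; cases x <;> simp⟩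

instance : DecidablePred IsMotzkin := fun w =>
  decidable_of_iff
    (w.count MStep.U = w.count MStep.D ∧
      ∀ p ∈ w.inits, p.count MStep.D ≤ p.count MStep.U)
    (by simp [IsMotzkin, List.mem_inits])

def LL : ℕ → Finset (List MStep)
  | 0 => {[]}
  | n + 1 => ((Finset.univ : Finset MStep) ×ˢ LL n).image fun p => p.1 :: p.2

lemma mem_LL {n : ℕ} {w : List MStep} : w ∈ LL n ↔ w.length = n := by
  induction n generalizing w with
  | zero => simp [LL, List.length_eq_zero_iff]
  | succ n ih =>
    simp only [LL, Finset.mem_image, Finset.mem_product, Finset.mem_univ, true_and]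
    constructor
    · rintro ⟨⟨a, t⟩, ht, rfl⟩; simp [ih.mp ht]
    · intro h
      match w with
      | a :: t => exact ⟨(a, t), ih.mpr (by simpa using h), rfl⟩

def MFin (n : ℕ) : Finset (List MStep) := (LL n).filter IsMotzkin

lemma nat_card_eq (n : ℕ) (P : List MStep → Prop) [DecidablePred P] :
    Nat.card {w : List MStep // w.length = n ∧ P w} = ((LL n).filter P).card := by
  rw [Nat.card_congr (Equiv.subtypeEquivRight (q := fun w => w ∈ (LL n).filter P)
    (fun w => by simp [mem_LL, Finset.mem_filter]))]
  exact Nat.card_eq_finsetCard _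

lemma shadow_eq (n : ℕ) :
    shadow n = ∑ w ∈ MFin n, (-1 : ℤ) ^ (w.count MStep.U) := by
  have he : evenMotzkin n = ((MFin n).filter (fun w => Even (w.count MStep.U))).card := by
    rw [evenMotzkin, nat_card_eq n (fun w => IsMotzkin w ∧ Even (w.count MStep.U)),
      MFin, Finset.filter_filter]
  have ho : oddMotzkin n = ((MFin n).filter (fun w => ¬ Even (w.count MStep.U))).card := by
    rw [oddMotzkin, nat_card_eq n (fun w => IsMotzkin w ∧ Odd (w.count MStep.U)),
      MFin, Finset.filter_filter]
    congr 1; apply Finset.filter_congr; intro w _; simp [Nat.not_even_iff_odd]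
  have h1 : ∑ w ∈ (MFin n).filter (fun w => Even (w.count MStep.U)), (-1 : ℤ) ^ (w.count MStep.U)
      = ((MFin n).filter (fun w => Even (w.count MStep.U))).card := by
    rw [Finset.sum_congr rfl (g := fun _ => (1 : ℤ)) (fun w hw => ?_)]
    · simp
    · simp only [Finset.mem_filter] at hw
      exact Even.neg_one_pow hw.2
  have h2 : ∑ w ∈ (MFin n).filter (fun w => ¬ Even (w.count MStep.U)), (-1 : ℤ) ^ (w.count MStep.U)
      = -((MFin n).filter (fun w => ¬ Even (w.count MStep.U))).card := by
    rw [Finset.sum_congr rfl (g := fun _ => (-1 : ℤ)) (fun w hw => ?_)]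
    · simp
    · simp only [Finset.mem_filter] at hw
      exact Odd.neg_one_pow (Nat.not_even_iff_odd.mp hw.2)
  rw [shadow, he, ho,
    ← Finset.sum_filter_add_sum_filter_not (MFin n) (fun w => Even (w.count MStep.U)), h1, h2]
  ring

def bal (w : List MStep) : ℤ := (w.count MStep.U : ℤ) - w.count MStep.D

lemma bal_nil : bal [] = 0 := by simp [bal]

@[simp] lemma bal_U_cons (w : List MStep) : bal (MStep.U :: w) = bal w + 1 := by
  simp [bal, List.count_cons]; push_cast; ring

@[simp] lemma bal_D_cons (w : List MStep) : bal (MStep.D :: w) = bal w - 1 := by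
  simp [bal, List.count_cons]; push_cast; ring

@[simp] lemma bal_H_cons (w : List MStep) : bal (MStep.H :: w) = bal w := by
  simp [bal, List.count_cons]

lemma bal_append (v w : List MStep) : bal (v ++ w) = bal v + bal w := by
  simp [bal, List.count_append]; push_cast; ring

lemma isMotzkin_iff {w : List MStep} :
    IsMotzkin w ↔ bal w = 0 ∧ ∀ p, p <+: w → 0 ≤ bal p := by
  unfold IsMotzkin bal
  constructor
  · rintro ⟨h1, h2⟩
    exact ⟨by omega, fun p hp => by have := h2 p hp; omega⟩
  · rintro ⟨h1, h2⟩
    exact ⟨by omega, fun p hp => by have := h2 p hp; omega⟩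

lemma isMotzkin_nil : IsMotzkin [] := ⟨rfl, by intro p hp; simp [List.prefix_nil.mp hp]⟩

lemma isMotzkin_H_cons {w : List MStep} : IsMotzkin (MStep.H :: w) ↔ IsMotzkin w := by
  simp only [isMotzkin_iff, bal_H_cons]
  constructor
  · rintro ⟨h1, h2⟩
    refine ⟨h1, fun p hp => ?_⟩
    have := h2 (MStep.H :: p) (by simpa using hp)
    rwa [bal_H_cons] at this
  · rintro ⟨h1, h2⟩
    refine ⟨h1, fun p hp => ?_⟩
    rcases List.prefix_cons_iff.mp hp with rfl | ⟨t, rfl, ht⟩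
    · simp [bal_nil]
    · rw [bal_H_cons]; exact h2 t ht

lemma isMotzkin_sandwich {w1 w2 : List MStep} (h1 : IsMotzkin w1) (h2 : IsMotzkin w2) :
    IsMotzkin (MStep.U :: w1 ++ MStep.D :: w2) := by
  rw [isMotzkin_iff] at h1 h2 ⊢
  constructor
  · simp only [List.cons_append, bal_U_cons, bal_append, bal_D_cons]
    rw [h1.1, h2.1]; ring
  · intro p hp
    rw [List.cons_append] at hp
    rcases List.prefix_cons_iff.mp hp with rfl | ⟨t, rfl, ht⟩
    · simp [bal_nil]
    · rw [bal_U_cons]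
      rcases (List.prefix_or_prefix_of_prefix ht (List.prefix_append w1 (MStep.D :: w2))) with
        h | h
      · have := h1.2 t h; omega
      · obtain ⟨q, rfl⟩ := h
        have hq : q <+: MStep.D :: w2 := (List.prefix_append_right_inj w1).mp ht
        rw [bal_append, h1.1]
        rcases List.prefix_cons_iff.mp hq with rfl | ⟨t2, rfl, ht2⟩
        · simp [bal_nil]
        · rw [bal_D_cons]
          have := h2.2 t2 ht2; omega

lemma exists_split : ∀ N (r : List MStep), r.length ≤ N → bal r ≤ -1 →
    ∃ w1 w2, r = w1 ++ MStep.D :: w2 ∧ IsMotzkin w1 := by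
  intro N
  induction N with
  | zero =>
    intro r hr hb
    rw [Nat.le_zero, List.length_eq_zero_iff] at hr
    subst hr; simp [bal_nil] at hb
  | succ N ih =>
    intro r hr hb
    match r with
    | [] => simp [bal_nil] at hb
    | MStep.D :: r' => exact ⟨[], r', rfl, isMotzkin_nil⟩
    | MStep.H :: r' =>
      obtain ⟨w1, w2, rfl, hw1⟩ := ih r' (by simpa using Nat.le_of_succ_le_succ hr)
        (by rw [bal_H_cons] at hb; exact hb)
      exact ⟨MStep.H :: w1, w2, rfl, isMotzkin_H_cons.mpr hw1⟩
    | MStep.U :: r' =>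
      have hr' : r'.length ≤ N := by simpa using Nat.le_of_succ_le_succ hr
      have hb' : bal r' ≤ -2 := by rw [bal_U_cons] at hb; omega
      obtain ⟨s1, t1, rfl, hs1⟩ := ih r' hr' (by omega)
      have hbt1 : bal t1 ≤ -1 := by
        have hbs1 : bal s1 = 0 := (isMotzkin_iff.mp hs1).1
        rw [bal_append, hbs1, bal_D_cons] at hb'; omega
      have ht1len : t1.length ≤ N := by
        rw [List.length_append, List.length_cons] at hr'; omega
      obtain ⟨s2, t2, rfl, hs2⟩ := ih t1 ht1len hbt1
      refine ⟨MStep.U :: s1 ++ MStep.D :: s2, t2, ?_, isMotzkin_sandwich hs1 hs2⟩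
      simp

lemma split_le {a1 b1 a2 b2 : List MStep} (ha1 : IsMotzkin a1) (ha2 : IsMotzkin a2)
    (he : a1 ++ MStep.D :: b1 = a2 ++ MStep.D :: b2) (hl : a1.length ≤ a2.length) :
    a1 = a2 := by
  rcases Nat.lt_or_ge a1.length a2.length with hlt | hge
  · exfalso
    have hp1 : a1 ++ [MStep.D] <+: a2 ++ MStep.D :: b2 := by
      rw [← he]; exact ⟨b1, by simp⟩
    have hp2 : a2 <+: a2 ++ MStep.D :: b2 := List.prefix_append _ _
    rcases List.prefix_or_prefix_of_prefix hp1 hp2 with h | h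
    · have h0 := (isMotzkin_iff.mp ha2).2 _ h
      rw [bal_append, (isMotzkin_iff.mp ha1).1] at h0
      simp [bal, List.count_cons] at h0
    · have hlen : a2.length = a1.length + 1 := by
        have := h.length_le; simp at this; omega
      have heq : a2 = a1 ++ [MStep.D] := h.eq_of_length (by simp [hlen])
      have h0 := (isMotzkin_iff.mp ha2).1
      rw [heq, bal_append, (isMotzkin_iff.mp ha1).1] at h0
      simp [bal, List.count_cons] at h0
  · exact List.append_inj_left he (le_antisymm hl hge)

lemma split_unique {w1 w2 v1 v2 : List MStep} (h1 : IsMotzkin w1) (h2 : IsMotzkin v1)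
    (he : w1 ++ MStep.D :: w2 = v1 ++ MStep.D :: v2) : w1 = v1 ∧ w2 = v2 := by
  have hww : w1 = v1 := by
    rcases Nat.le_total w1.length v1.length with h | h
    · exact split_le h1 h2 he h
    · exact (split_le h2 h1 he.symm h).symm
  subst hww
  refine ⟨rfl, ?_⟩
  have := List.append_cancel_left he
  simpa using this

/-- Decomposition of a nonempty Motzkin path. -/
lemma motzkin_decomp {w : List MStep} (hw : IsMotzkin w) (hne : w ≠ []) :
    (∃ t, w = MStep.H :: t ∧ IsMotzkin t) ∨
    (∃ w1 w2, w = MStep.U :: w1 ++ MStep.D :: w2 ∧ IsMotzkin w1 ∧ IsMotzkin w2) := by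
  rw [isMotzkin_iff] at hw
  match w with
  | [] => exact absurd rfl hne
  | MStep.D :: t =>
    exfalso
    have := hw.2 [MStep.D] ⟨t, rfl⟩
    simp [bal_nil] at this
  | MStep.H :: t =>
    left
    refine ⟨t, rfl, ?_⟩
    exact isMotzkin_H_cons.mp (isMotzkin_iff.mpr hw)
  | MStep.U :: t =>
    right
    have hbt : bal t ≤ -1 := by
      have := hw.1; rw [bal_U_cons] at this; omega
    obtain ⟨w1, w2, rfl, hw1⟩ := exists_split t.length t le_rfl hbt
    refine ⟨w1, w2, rfl, hw1, ?_⟩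
    rw [isMotzkin_iff]
    have hbw1 : bal w1 = 0 := (isMotzkin_iff.mp hw1).1
    constructor
    · have := hw.1
      rw [bal_U_cons, bal_append, hbw1, bal_D_cons] at this
      omega
    · intro q hq
      have hpre : MStep.U :: (w1 ++ MStep.D :: q) <+: MStep.U :: (w1 ++ MStep.D :: w2) := by
        simp only [List.cons_prefix_cons, true_and]
        exact (List.prefix_append_right_inj w1).mpr (by simpa using hq)
      have := hw.2 _ hpre
      rw [bal_U_cons, bal_append, hbw1, bal_D_cons] at this
      omega

lemma mem_MFin {n : ℕ} {w : List MStep} :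
    w ∈ MFin n ↔ w.length = n ∧ IsMotzkin w := by
  simp [MFin, Finset.mem_filter, mem_LL]

def sgn (w : List MStep) : ℤ := (-1) ^ (w.count MStep.U)

lemma sgn_H_cons (w : List MStep) : sgn (MStep.H :: w) = sgn w := by
  simp [sgn, List.count_cons]

lemma sgn_sandwich (w1 w2 : List MStep) :
    sgn (MStep.U :: w1 ++ MStep.D :: w2) = -(sgn w1 * sgn w2) := by
  have hc : (MStep.U :: w1 ++ MStep.D :: w2).count MStep.U
      = (w1.count MStep.U + w2.count MStep.U) + 1 := by
    simp only [List.cons_append, List.count_cons, List.count_append]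
    simp
  rw [sgn, hc, pow_succ, pow_add, sgn, sgn]
  ring

lemma MFin_zero : MFin 0 = {[]} := by decide
lemma MFin_one : MFin 1 = {[MStep.H]} := by decide

lemma shadow_zero : shadow 0 = 1 := by
  rw [shadow_eq, MFin_zero]; simp [sgn]

lemma shadow_one : shadow 1 = 1 := by
  rw [shadow_eq, MFin_one]; simp [List.count_cons]

lemma sum_MFin_eq (n : ℕ) : ∑ w ∈ MFin n, sgn w = shadow n :=
  (shadow_eq n).symm

abbrev MSrc (m : ℕ) := (MFin (m+1)).disjSum
  ((Finset.HasAntidiagonal.antidiagonal m).sigma fun ij => MFin ij.1 ×ˢ MFin ij.2)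

def MPhi : List MStep ⊕ ((_ : ℕ × ℕ) × List MStep × List MStep) → List MStep :=
  Sum.elim (fun w => MStep.H :: w)
    (fun y => MStep.U :: y.2.1 ++ MStep.D :: y.2.2)

lemma shadow_rec (m : ℕ) :
    shadow (m + 2) = shadow (m + 1) -
      ∑ ij ∈ Finset.HasAntidiagonal.antidiagonal m, shadow ij.1 * shadow ij.2 := by
  have key : ∑ x ∈ MSrc m,
      (Sum.elim (fun w => sgn w)
        (fun x : (_ : ℕ × ℕ) × List MStep × List MStep => -(sgn x.2.1 * sgn x.2.2)) x) =
      ∑ w ∈ MFin (m+2), sgn w := by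
    refine Finset.sum_bij (i := fun x _ => MPhi x) ?_ ?_ ?_ ?_
    · rintro (w | ⟨⟨i, j⟩, w1, w2⟩) ha
      · rw [Finset.inl_mem_disjSum, mem_MFin] at ha
        dsimp only [MPhi, Sum.elim_inl]
        rw [mem_MFin]
        exact ⟨by simp [ha.1], isMotzkin_H_cons.mpr ha.2⟩
      · rw [Finset.inr_mem_disjSum, Finset.mem_sigma] at ha
        obtain ⟨hij, hw⟩ := ha
        rw [Finset.mem_product] at hw
        rw [mem_MFin] at hw
        have hw2 := hw.2
        rw [mem_MFin] at hw2
        rw [Finset.HasAntidiagonal.mem_antidiagonal] at hij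
        dsimp only [MPhi, Sum.elim_inr]
        rw [mem_MFin]
        dsimp only at hij hw hw2
        constructor
        · simp only [List.cons_append, List.length_cons, List.length_append,
            List.length_cons]
          have h1 := hw.1.1
          have h2 := hw2.1
          omega
        · exact isMotzkin_sandwich hw.1.2 hw2.2
    · rintro (w | ⟨⟨i, j⟩, w1, w2⟩) ha (v | ⟨⟨i', j'⟩, v1, v2⟩) hb h <;>
        simp only [MPhi, Sum.elim_inl, Sum.elim_inr, List.cons_append,
          List.cons.injEq, true_and] at h
      · rw [h]
      · exact absurd h.1 (by simp)
      · exact absurd h.1 (by simp)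
      · rw [Finset.inr_mem_disjSum, Finset.mem_sigma, Finset.mem_product] at ha hb
        dsimp only at ha hb h
        have hai : w1.length = i := (mem_MFin.mp ha.2.1).1
        have haj : w2.length = j := (mem_MFin.mp ha.2.2).1
        have hbi : v1.length = i' := (mem_MFin.mp hb.2.1).1
        have hbj : v2.length = j' := (mem_MFin.mp hb.2.2).1
        obtain ⟨e1, e2⟩ := split_unique (mem_MFin.mp ha.2.1).2 (mem_MFin.mp hb.2.1).2 h
        subst e1; subst e2
        have ei : i = i' := by omega
        have ej : j = j' := by omega
        subst ei; subst ej
        rfl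
    · intro w hw
      rw [mem_MFin] at hw
      have hne : w ≠ [] := by intro h; rw [h] at hw; simp at hw
      rcases motzkin_decomp hw.2 hne with ⟨t, rfl, ht⟩ | ⟨w1, w2, rfl, h1, h2⟩
      · refine ⟨Sum.inl t, ?_, rfl⟩
        rw [Finset.inl_mem_disjSum, mem_MFin]
        exact ⟨by simpa using hw.1, ht⟩
      · refine ⟨Sum.inr ⟨(w1.length, w2.length), (w1, w2)⟩, ?_, rfl⟩
        rw [Finset.inr_mem_disjSum, Finset.mem_sigma, Finset.mem_product]
        refine ⟨?_, mem_MFin.mpr ⟨rfl, h1⟩, mem_MFin.mpr ⟨rfl, h2⟩⟩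
        rw [Finset.HasAntidiagonal.mem_antidiagonal]
        dsimp only
        have := hw.1
        simp only [List.cons_append, List.length_cons, List.length_append] at this
        omega
    · rintro (w | ⟨⟨i, j⟩, w1, w2⟩) ha
      · dsimp only [MPhi, Sum.elim_inl]
        rw [sgn_H_cons]
      · dsimp only [MPhi, Sum.elim_inr]
        rw [sgn_sandwich]
  rw [Finset.sum_disjSum] at key
  simp only [Sum.elim_inl, Sum.elim_inr] at key
  rw [Finset.sum_sigma] at key
  have hprod : ∀ ij : ℕ × ℕ,
      ∑ x ∈ MFin ij.1 ×ˢ MFin ij.2, -(sgn x.1 * sgn x.2) = -(shadow ij.1 * shadow ij.2) := by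
    intro ij
    rw [Finset.sum_neg_distrib]
    congr 1
    rw [Finset.sum_product, ← sum_MFin_eq, ← sum_MFin_eq, Finset.sum_mul_sum]
  rw [Finset.sum_congr rfl (fun ij _ => hprod ij)] at key
  rw [← sum_MFin_eq (m+2), ← key, sum_MFin_eq, Finset.sum_neg_distrib]
  ring

open PowerSeries in
lemma coeff_pow_eq_zero {g : PowerSeries ℤ} (hg : constantCoeff g = 0)
    {n k : ℕ} (h : n < k) : coeff n (g ^ k) = 0 := by
  obtain ⟨h1, rfl⟩ := X_dvd_iff.mpr hg
  rw [mul_pow, coeff_X_pow_mul']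
  simp [Nat.not_le.mpr h]

open PowerSeries in
lemma coeff_aeval (g : PowerSeries ℤ) (hg : constantCoeff g = 0)
    (P : Polynomial ℤ) (n : ℕ) :
    coeff n (Polynomial.aeval g P) =
      ∑ i ∈ Finset.range (n + 1), P.coeff i * coeff n (g ^ i) := by
  rw [Polynomial.aeval_eq_sum_range'
    (show P.natDegree < P.natDegree + n + 2 by omega) g]
  rw [map_sum]
  have : ∀ i, coeff n (P.coeff i • g ^ i) = P.coeff i * coeff n (g ^ i) := by
    intro i; exact coeff_smul n (g ^ i) (P.coeff i)
  refine (Finset.sum_congr rfl (fun i _ => this i)).trans ?_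
  rw [Finset.sum_subset (Finset.range_subset_range.mpr (show n + 1 ≤ P.natDegree + n + 2 by omega))]
  intro i _ hi
  rw [Finset.mem_range, Nat.not_lt] at hi
  rw [coeff_pow_eq_zero hg (by omega), mul_zero]

open PowerSeries in
lemma coeff_PSComp (f g : PowerSeries ℤ) (n : ℕ) :
    coeff n (PSComp f g) =
      ∑ i ∈ Finset.range (n + 1), coeff i f * coeff n (g ^ i) := by
  rw [PSComp, coeff_mk, map_sum]
  simp_rw [coeff_C_mul]

open PowerSeries in
lemma coeff_PSComp_eq_aeval_trunc {f g : PowerSeries ℤ} (hg : constantCoeff g = 0)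
    {a n : ℕ} (h : a ≤ n) :
    coeff a (PSComp f g) = coeff a (Polynomial.aeval g (trunc (n + 1) f)) := by
  rw [coeff_PSComp, coeff_aeval g hg]
  refine Finset.sum_congr rfl fun i hi => ?_
  rw [Finset.mem_range] at hi
  rw [coeff_trunc]
  rw [if_pos (by omega)]

open PowerSeries in
lemma PSComp_add (f1 f2 g : PowerSeries ℤ) :
    PSComp (f1 + f2) g = PSComp f1 g + PSComp f2 g := by
  ext n
  rw [map_add, coeff_PSComp, coeff_PSComp, coeff_PSComp, ← Finset.sum_add_distrib]
  refine Finset.sum_congr rfl fun i _ => ?_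
  rw [map_add]; ring

open PowerSeries in
lemma PSComp_sub (f1 f2 g : PowerSeries ℤ) :
    PSComp (f1 - f2) g = PSComp f1 g - PSComp f2 g := by
  ext n
  rw [map_sub, coeff_PSComp, coeff_PSComp, coeff_PSComp, ← Finset.sum_sub_distrib]
  refine Finset.sum_congr rfl fun i _ => ?_
  rw [map_sub]; ring

open PowerSeries in
lemma PSComp_X {g : PowerSeries ℤ} (hg : constantCoeff g = 0) :
    PSComp X g = g := by
  ext n
  rw [coeff_PSComp]
  rcases Nat.eq_zero_or_pos n with rfl | hn
  · simp [coeff_X, hg]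
  · rw [Finset.sum_eq_single 1]
    · simp
    · intro i hi h1
      rw [coeff_X, if_neg h1, zero_mul]
    · intro h; exact absurd (Finset.mem_range.mpr (by omega)) h

open PowerSeries in
lemma PSComp_mul (f1 f2 : PowerSeries ℤ) {g : PowerSeries ℤ}
    (hg : constantCoeff g = 0) :
    PSComp (f1 * f2) g = PSComp f1 g * PSComp f2 g := by
  ext n
  rw [coeff_PSComp_eq_aeval_trunc hg (le_refl n)]
  have step1 : coeff n (Polynomial.aeval g (trunc (n + 1) (f1 * f2))) =
      coeff n (Polynomial.aeval g (trunc (n + 1) f1 * trunc (n + 1) f2)) := by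
    rw [coeff_aeval g hg, coeff_aeval g hg]
    refine Finset.sum_congr rfl fun i hi => ?_
    rw [Finset.mem_range] at hi
    congr 1
    rw [coeff_trunc, if_pos (by omega), Polynomial.coeff_mul, PowerSeries.coeff_mul]
    refine Finset.sum_congr rfl fun p hp => ?_
    rw [Finset.HasAntidiagonal.mem_antidiagonal] at hp
    rw [coeff_trunc, coeff_trunc, if_pos (by omega), if_pos (by omega)]
  rw [step1, map_mul, PowerSeries.coeff_mul, PowerSeries.coeff_mul]
  refine Finset.sum_congr rfl fun p hp => ?_
  rw [Finset.HasAntidiagonal.mem_antidiagonal] at hp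
  rw [← coeff_PSComp_eq_aeval_trunc hg (by omega : p.1 ≤ n),
    ← coeff_PSComp_eq_aeval_trunc hg (by omega : p.2 ≤ n)]

noncomputable def gS : PowerSeries ℤ :=
  PowerSeries.mk fun n => if n = 0 then 0 else (-1) ^ (n - 1) * shadow (n - 1)

noncomputable def fS : PowerSeries ℤ := PowerSeries.mk fun n => (Nat.fib n : ℤ)

open PowerSeries in
lemma gS_const : constantCoeff gS = 0 := by
  rw [← coeff_zero_eq_constantCoeff, gS, coeff_mk]; simp

open PowerSeries in
lemma fS_const : constantCoeff fS = 0 := by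
  rw [← coeff_zero_eq_constantCoeff, fS, coeff_mk]; simp

open PowerSeries in
lemma coeff_gS (n : ℕ) :
    PowerSeries.coeff n gS = if n = 0 then 0 else (-1) ^ (n - 1) * shadow (n - 1) := by
  rw [gS, coeff_mk]

open PowerSeries in
lemma coeff_gS_succ (n : ℕ) : coeff (n + 1) gS = (-1) ^ n * shadow n := by
  rw [coeff_gS]; simp

open PowerSeries in
lemma eqF : fS = X + X * fS + X * X * fS := by
  ext n
  match n with
  | 0 =>
    rw [fS, coeff_mk, map_add, map_add]
    rw [mul_assoc, coeff_zero_X_mul, coeff_zero_X_mul]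
    simp
  | 1 =>
    rw [fS, coeff_mk, map_add, map_add, coeff_succ_X_mul, mul_assoc]
    rw [coeff_succ_X_mul, coeff_zero_X_mul, coeff_mk, coeff_one_X]
    simp
  | (n + 2) =>
    rw [fS, coeff_mk, map_add, map_add, coeff_succ_X_mul, mul_assoc]
    rw [coeff_succ_X_mul, coeff_succ_X_mul, coeff_mk, coeff_mk, coeff_X]
    rw [if_neg (by omega)]
    rw [Nat.fib_add_two]
    push_cast
    ring

open PowerSeries in
lemma coeff_gS_sq (n : ℕ) : coeff (n + 2) (gS * gS) =
    (-1) ^ n * ∑ k ∈ Finset.range (n + 1), shadow k * shadow (n - k) := by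
  rw [PowerSeries.coeff_mul, Finset.Nat.sum_antidiagonal_eq_sum_range_succ_mk]
  have h0 : coeff 0 gS = 0 := by rw [coeff_gS]; simp
  rw [Finset.sum_range_succ']
  rw [show coeff 0 gS * coeff (n + 2 - 0) gS = 0 by rw [h0, zero_mul]]
  rw [add_zero, Finset.sum_range_succ]
  rw [show coeff (n + 1 + 1) gS * coeff (n + 2 - (n + 1 + 1)) gS = 0 by
    rw [show n + 2 - (n + 1 + 1) = 0 by omega, h0, mul_zero]]
  rw [add_zero, Finset.mul_sum]
  refine Finset.sum_congr rfl fun i hi => ?_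
  rw [Finset.mem_range] at hi
  rw [show n + 2 - (i + 1) = (n - i) + 1 by omega, coeff_gS_succ, coeff_gS_succ]
  rw [show ((-1 : ℤ) ^ i * shadow i) * ((-1) ^ (n - i) * shadow (n - i))
      = ((-1) ^ i * (-1) ^ (n - i)) * (shadow i * shadow (n - i)) by ring]
  rw [← pow_add, show i + (n - i) = n by omega]

open PowerSeries in
lemma eqG : gS = X - X * gS - X * (gS * gS) := by
  ext n
  match n with
  | 0 =>
    rw [coeff_gS, map_sub, map_sub, coeff_zero_X_mul, coeff_zero_X_mul]
    simp
  | 1 =>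
    have h0 : coeff 0 gS = 0 := by rw [coeff_gS]; simp
    have h0' : coeff 0 (gS * gS) = 0 := by
      rw [PowerSeries.coeff_mul]
      simp [h0]
    rw [coeff_gS, map_sub, map_sub, coeff_succ_X_mul, coeff_succ_X_mul]
    rw [coeff_one_X, h0, h0']
    simp [shadow_zero]
  | 2 =>
    rw [coeff_gS, map_sub, map_sub, coeff_succ_X_mul, coeff_succ_X_mul]
    rw [coeff_X, if_neg (by omega), coeff_gS_succ]
    have h0 : coeff 0 gS = 0 := by rw [coeff_gS]; simp
    have h1 : coeff 1 (gS * gS) = 0 := by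
      rw [PowerSeries.coeff_mul]
      apply Finset.sum_eq_zero
      intro p hp
      rw [Finset.HasAntidiagonal.mem_antidiagonal] at hp
      rcases Nat.eq_zero_or_pos p.1 with hp1 | hp1
      · rw [hp1, h0, zero_mul]
      · rw [show p.2 = 0 by omega, h0, mul_zero]
    rw [h1, shadow_zero, shadow_one]
    norm_num
  | (n + 3) =>
    rw [coeff_gS, map_sub, map_sub, coeff_succ_X_mul, coeff_succ_X_mul]
    rw [coeff_X, if_neg (by omega), coeff_gS_succ, coeff_gS_sq]
    rw [if_neg (by omega)]
    have hrec := shadow_rec n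
    rw [Finset.Nat.sum_antidiagonal_eq_sum_range_succ_mk] at hrec
    rw [show n + 3 - 1 = n + 2 by omega, hrec]
    have hpow : ((-1 : ℤ)) ^ (n + 2) = (-1) ^ n := by ring
    rw [hpow]
    ring

open PowerSeries in
theorem stmt_18 :
    ((PowerSeries.mk fun n => if n = 0 then 0 else (-1) ^ (n - 1) * shadow (n - 1)) =
      X * PowerSeries.rescale (-1) (PowerSeries.mk shadow)) ∧
    PSComp (PowerSeries.mk fun n => if n = 0 then 0 else (-1) ^ (n - 1) * shadow (n - 1))
      (PowerSeries.mk fun n => (Nat.fib n : ℤ)) = X ∧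
    PSComp (PowerSeries.mk fun n => (Nat.fib n : ℤ))
      (PowerSeries.mk fun n => if n = 0 then 0 else (-1) ^ (n - 1) * shadow (n - 1)) = X := by
  have hgs : (PowerSeries.mk fun n => if n = 0 then 0 else (-1) ^ (n - 1) * shadow (n - 1))
      = gS := rfl
  have hfs : (PowerSeries.mk fun n => (Nat.fib n : ℤ)) = fS := rfl
  rw [hgs, hfs]
  refine ⟨?_, ?_, ?_⟩
  · ext n
    match n with
    | 0 =>
      rw [coeff_gS, coeff_zero_X_mul]
      simp
    | (n + 1) =>
      rw [coeff_gS_succ, coeff_succ_X_mul, coeff_rescale, coeff_mk]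
  · set A := PSComp gS fS with hA
    have hcomp : A = fS - fS * A - fS * (A * A) := by
      calc A = PSComp (X - X * gS - X * (gS * gS)) fS := by rw [← eqG]
        _ = PSComp X fS - PSComp X fS * PSComp gS fS -
            PSComp X fS * (PSComp gS fS * PSComp gS fS) := by
          rw [PSComp_sub, PSComp_sub, PSComp_mul X gS fS_const,
            PSComp_mul X (gS * gS) fS_const, PSComp_mul gS gS fS_const]
        _ = fS - fS * A - fS * (A * A) := by rw [PSComp_X fS_const]
    have hX : (X : PowerSeries ℤ) = fS - fS * X - fS * (X * X) := by
      linear_combination -eqF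
    have factor : (A - X) * (1 + fS * (1 + A + X)) = 0 := by
      linear_combination hcomp - hX
    rcases mul_eq_zero.mp factor with h | h
    · exact sub_eq_zero.mp h
    · exfalso
      have h0 := congrArg (constantCoeff) h
      rw [map_add, map_mul, map_one, fS_const] at h0
      simp at h0
  · set B := PSComp fS gS with hB
    have hcomp : B = gS + gS * B + gS * gS * B := by
      calc B = PSComp (X + X * fS + X * X * fS) gS := by rw [← eqF]
        _ = PSComp X gS + PSComp X gS * PSComp fS gS +
            PSComp X gS * PSComp X gS * PSComp fS gS := by
          rw [PSComp_add, PSComp_add, PSComp_mul X fS gS_const,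
            PSComp_mul (X * X) fS gS_const, PSComp_mul X X gS_const]
        _ = gS + gS * B + gS * gS * B := by rw [PSComp_X gS_const]
    have hX : (X : PowerSeries ℤ) = gS + gS * X + gS * gS * X := by
      linear_combination -eqG
    have factor : (B - X) * (1 - gS - gS * gS) = 0 := by
      linear_combination hcomp - hX
    rcases mul_eq_zero.mp factor with h | h
    · exact sub_eq_zero.mp h
    · exfalso
      have h0 := congrArg (constantCoeff) h
      rw [map_sub, map_sub, map_mul, map_one, gS_const] at h0
      simp at h0
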